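/- Let Γ = (C, A, Δ) be a normed BPA system and R ⊆ C_G. Then Id_R is admissible (i.e., Id_{Id_R} = Id_R), R ⊆ Id_R, and Id_R is the smallest admissible set containing R: for every admissible S ⊆ C_G with R ⊆ S one has Id_R ⊆ S. -/

import Mathlib

open Relation

/-- A BPA system over constants `C` and actions `A`: a distinguished silent
action `tau`, and a finite set of transition rules `X —ℓ→ α`, where `C` and
`A` are finite. -/
structure BPA (C A : Type) where
  tau : A
  rules : Set (C × A × List C)
  finC : Finite C
  finA : Finite A
  finRules : rules.Finite

namespace BPA

variable {C A : Type}

/-- One-step labelled transition between processes.  Processes are strings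
over `C` (lists, with the leftmost constant acting first). -/
def Step (Γ : BPA C A) (ℓ : A) (p q : List C) : Prop :=
  ∃ X γ β, (X, ℓ, γ) ∈ Γ.rules ∧ p = X :: β ∧ q = γ ++ β

/-- A transition carrying an arbitrary label. -/
def AnyStep (Γ : BPA C A) (p q : List C) : Prop := ∃ ℓ, Γ.Step ℓ p q

/-- `⟹` : the reflexive transitive closure of silent steps. -/
def TauStar (Γ : BPA C A) : List C → List C → Prop := ReflTransGen (Γ.Step Γ.tau)

/-- A process is normed if it can reach the empty process `ε`. -/
def NormedProc (Γ : BPA C A) (p : List C) : Prop := ReflTransGen Γ.AnyStep p []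

/-- The BPA system is normed. -/
def Normed (Γ : BPA C A) : Prop := ∀ X : C, Γ.NormedProc [X]

/-- A chain of `s`-steps starting at `start` in which every visited state is
related by `r` to the process `anchor`. -/
def RelChain (s : List C → List C → Prop) (r : List C → List C → Prop)
    (anchor : List C) : List C → List C → Prop :=
  ReflTransGen fun x y => s x y ∧ r anchor y

/-- Branching bisimulation (an equivalence relation by convention). -/
def IsBranchingBisim (Γ : BPA C A) (r : List C → List C → Prop) : Prop :=
  Equivalence r ∧ ∀ α β, r α β →
    ((∀ a, a ≠ Γ.tau → ∀ α', Γ.Step a α α' →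
        ∃ β'' β', RelChain (Γ.Step Γ.tau) r β β β'' ∧ Γ.Step a β'' β' ∧ r α' β') ∧
     (∀ α', Γ.Step Γ.tau α α' → ¬ r α α' →
        ∃ β'' β', RelChain (Γ.Step Γ.tau) r β β β'' ∧ Γ.Step Γ.tau β'' β' ∧
          ¬ r β'' β' ∧ r α' β'))

/-- Branching bisimilarity `≃` : the largest branching bisimulation. -/
def Bisim (Γ : BPA C A) (α β : List C) : Prop :=
  ∃ r, Γ.IsBranchingBisim r ∧ r α β

/-- A ground process: it can silently reach `ε`. -/
def Ground (Γ : BPA C A) (p : List C) : Prop := Γ.TauStar p []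

/-- The set `C_G` of ground constants. -/
def GroundC (Γ : BPA C A) : Set C := {X | Γ.Ground [X]}

/-- `R`-equality `=_R`: the two processes differ only in suffixes over `R`. -/
def REq (R : Set C) (α β : List C) : Prop :=
  ∃ ζ a b, α = ζ ++ a ∧ β = ζ ++ b ∧ (∀ X ∈ a, X ∈ R) ∧ (∀ X ∈ b, X ∈ R)

open Classical in
/-- The `R`-normal form `α_R` of a process: delete the maximal suffix over `R`. -/
noncomputable def nf (R : Set C) (α : List C) : List C :=
  (α.reverse.dropWhile fun X => decide (X ∈ R)).reverse

/-- A process is in `R`-normal form. -/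
def InNF (R : Set C) (α : List C) : Prop := nf R α = α

/-- The `R`-transition relation `—ℓ→_R` between `R`-normal forms. -/
def StepR (Γ : BPA C A) (R : Set C) (ℓ : A) (ζ η : List C) : Prop :=
  ∃ α β, ζ = nf R α ∧ η = nf R β ∧ Γ.Step ℓ α β

/-- `⟹_R`. -/
def TauStarR (Γ : BPA C A) (R : Set C) : List C → List C → Prop :=
  ReflTransGen (Γ.StepR R Γ.tau)

/-- `R`-bisimulation: an equivalence relation containing `=_R` satisfying
ground preservation and the relativized branching transfer conditions. -/
def IsRBisim (Γ : BPA C A) (R : Set C) (r : List C → List C → Prop) : Prop :=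
  Equivalence r ∧ (∀ α β, REq R α β → r α β) ∧
  ∀ α β, r α β →
    ((Γ.TauStar α [] → Γ.TauStar β []) ∧
     (∀ α', Γ.Step Γ.tau α α' → ¬ r α α' →
        ∃ β'' β', RelChain (Γ.StepR R Γ.tau) r β (nf R β) β'' ∧
          Γ.StepR R Γ.tau β'' β' ∧ ¬ r β'' β' ∧ r α' β') ∧
     (∀ a, a ≠ Γ.tau → ∀ α', Γ.Step a α α' →
        ∃ β'' β', RelChain (Γ.StepR R Γ.tau) r β (nf R β) β'' ∧
          Γ.StepR R a β'' β' ∧ r α' β'))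

/-- `R`-bisimilarity `≃_R` : the largest `R`-bisimulation. -/
def RBisim (Γ : BPA C A) (R : Set C) (α β : List C) : Prop :=
  ∃ r, Γ.IsRBisim R r ∧ r α β

/-- `Id_R = {X ∈ C : X ≃_R ε}`. -/
def IdR (Γ : BPA C A) (R : Set C) : Set C := {X | Γ.RBisim R [X] []}

/-- `Rd_R(γ) = {X ∈ C : Xγ ≃_R γ}`. -/
def RdR (Γ : BPA C A) (R : Set C) (γ : List C) : Set C :=
  {X | Γ.RBisim R (X :: γ) γ}

/-- An admissible reference set: `R = Id_R`. -/
def Admissible (Γ : BPA C A) (R : Set C) : Prop := R = Γ.IdR R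

section Aux
variable {C A : Type} {Γ : BPA C A} {R S : Set C}

/-! ### Basic list / nf lemmas -/

lemma nf_decomp (R : Set C) (v : List C) :
    ∃ c, v = nf R v ++ c ∧ ∀ X ∈ c, X ∈ R := by
  classical
  refine ⟨(v.reverse.takeWhile fun X => decide (X ∈ R)).reverse, ?_, ?_⟩
  · unfold nf
    conv_lhs => rw [← List.reverse_reverse v, ← List.takeWhile_append_dropWhile (p := fun X => decide (X ∈ R)) (l := v.reverse)]
    rw [List.reverse_append]
  · intro X hX
    rw [List.mem_reverse] at hX
    have := List.mem_takeWhile_imp hX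
    simpa using this

lemma nf_append_allR (h : ∀ X ∈ v, X ∈ R) (u : List C) :
    nf R (u ++ v) = nf R u := by
  classical
  unfold nf
  rw [List.reverse_append, List.dropWhile_append]
  have : v.reverse.dropWhile (fun X => decide (X ∈ R)) = [] := by
    rw [List.dropWhile_eq_nil_iff]
    intro x hx
    simp only [List.mem_reverse] at hx
    simpa using h x hx
  simp [this]

lemma nf_nil (R : Set C) : nf R ([] : List C) = [] := rfl

lemma nf_eq_nil_iff {v : List C} : nf R v = [] ↔ ∀ X ∈ v, X ∈ R := by
  classical
  unfold nf
  rw [List.reverse_eq_nil_iff, List.dropWhile_eq_nil_iff]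
  constructor
  · intro h X hX; have := h X (by simpa using hX); simpa using this
  · intro h X hX; simp only [List.mem_reverse] at hX; simpa using h X hX

lemma nf_append_nonnil {v : List C} (h : nf R v ≠ []) (u : List C) :
    nf R (u ++ v) = u ++ nf R v := by
  classical
  unfold nf
  rw [List.reverse_append, List.dropWhile_append]
  have h' : v.reverse.dropWhile (fun X => decide (X ∈ R)) ≠ [] := by
    intro hh
    exact h (by unfold nf; rw [hh]; rfl)
  rw [if_neg (by simpa [List.isEmpty_iff] using h'), List.reverse_append,
    List.reverse_reverse]

lemma nf_idem (R : Set C) (v : List C) : nf R (nf R v) = nf R v := by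
  obtain ⟨c, hv, hc⟩ := nf_decomp R v
  conv_rhs => rw [hv]
  rw [nf_append_allR hc]

lemma nf_nf (hRS : R ⊆ S) (v : List C) : nf S (nf R v) = nf S v := by
  obtain ⟨c, hv, hc⟩ := nf_decomp R v
  conv_rhs => rw [hv]
  rw [nf_append_allR (fun X hX => hRS (hc X hX))]

lemma nf_sandwich (R : Set C) (u v : List C) :
    nf R (u ++ nf R v) = nf R (u ++ v) := by
  obtain ⟨c, hv, hc⟩ := nf_decomp R v
  conv_rhs => rw [hv, ← List.append_assoc, nf_append_allR hc]

lemma nf_eq_of_REq (h : REq R α β) : nf R α = nf R β := by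
  obtain ⟨ζ, a, b, rfl, rfl, ha, hb⟩ := h
  rw [nf_append_allR ha, nf_append_allR hb]

lemma REq_of_nf_eq (h : nf R α = nf R β) : REq R α β := by
  obtain ⟨c, hv, hc⟩ := nf_decomp R α
  obtain ⟨d, hw, hd⟩ := nf_decomp R β
  exact ⟨nf R α, c, d, hv, by rw [h]; exact hw, hc, hd⟩

end Aux
section Aux2
variable {C A : Type} {Γ : BPA C A} {R S : Set C}

/-! ### Steps, ground processes -/

lemma Step.append (h : Γ.Step ℓ p q) (w : List C) : Γ.Step ℓ (p ++ w) (q ++ w) := by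
  obtain ⟨X, γ, β, hr, rfl, rfl⟩ := h
  exact ⟨X, γ, β ++ w, hr, rfl, by simp⟩

lemma TauStar.append (h : Γ.TauStar p q) (w : List C) :
    Γ.TauStar (p ++ w) (q ++ w) :=
  ReflTransGen.lift (fun x => x ++ w) (fun _ _ h => h.append w) _ _ h

lemma ground_append (hp : Γ.TauStar p []) (hq : Γ.TauStar q []) :
    Γ.TauStar (p ++ q) [] := by
  have := hp.append q
  simpa [TauStar] using this.trans hq

lemma ground_of_all (hR : R ⊆ Γ.GroundC) (h : ∀ X ∈ p, X ∈ R) :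
    Γ.TauStar p [] := by
  induction p with
  | nil => exact ReflTransGen.refl
  | cons X t ih =>
      have hX : Γ.TauStar [X] [] := hR (h X (by simp))
      have ht : Γ.TauStar t [] := ih (fun Y hY => h Y (by simp [hY]))
      simpa using ground_append hX ht

lemma tauStar_decomp (h : Γ.TauStar (u ++ v) []) :
    Γ.TauStar u [] ∧ Γ.TauStar v [] := by
  suffices H : ∀ w, Γ.TauStar w [] → ∀ u v, w = u ++ v → Γ.TauStar u [] ∧ Γ.TauStar v [] from
    H _ h u v rfl
  intro w hw
  induction hw using ReflTransGen.head_induction_on with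
  | refl =>
      rintro u v huv
      obtain ⟨h1, h2⟩ := List.append_eq_nil_iff.mp huv.symm
      subst h1; subst h2
      exact ⟨ReflTransGen.refl, ReflTransGen.refl⟩
  | head hs hrest ih =>
      rename_i x y
      rintro u v rfl
      match u with
      | [] =>
          exact ⟨ReflTransGen.refl, ReflTransGen.head hs hrest⟩
      | X :: t =>
          obtain ⟨Y, g, β, hr, he, rfl⟩ := hs
          rw [List.cons_append] at he
          injection he with he1 he2
          subst he1; subst he2
          obtain ⟨h1, h2⟩ := ih (g ++ t) v (by simp)
          exact ⟨ReflTransGen.head ⟨X, g, t, hr, rfl, rfl⟩ h1, h2⟩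

/-! ### StepR lemmas -/

lemma stepR_of_step (h : Γ.Step ℓ p q) : Γ.StepR R ℓ (nf R p) (nf R q) :=
  ⟨p, q, rfl, rfl, h⟩

lemma tauStarR_of_tauStar (h : Γ.TauStar p q) :
    Γ.TauStarR R (nf R p) (nf R q) :=
  ReflTransGen.lift (nf R) (fun _ _ h => stepR_of_step h) _ _ h

lemma StepR.nf_right (h : Γ.StepR R ℓ z w) : nf R w = w := by
  obtain ⟨p, q, _, rfl, _⟩ := h; exact nf_idem R q

lemma TauStarR.nf_right (h : Γ.TauStarR R z w) (hz : nf R z = z) : nf R w = w := by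
  induction h with
  | refl => exact hz
  | tail _ hs ih => exact hs.nf_right

lemma stepR_proj (hRS : R ⊆ S) (h : Γ.StepR R ℓ z w) :
    Γ.StepR S ℓ (nf S z) (nf S w) := by
  obtain ⟨p, q, rfl, rfl, hs⟩ := h
  rw [nf_nf hRS, nf_nf hRS]
  exact stepR_of_step hs

lemma tauStarR_proj (hRS : R ⊆ S) (h : Γ.TauStarR R z w) :
    Γ.TauStarR S (nf S z) (nf S w) :=
  ReflTransGen.lift (nf S) (fun _ _ h => stepR_proj hRS h) _ _ h

/-- Realization : a silent `R`-run to `ε` can be executed by any process with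
the given normal form. -/
lemma tauStar_of_tauStarR_nil (hRG : R ⊆ Γ.GroundC) :
    ∀ z, Γ.TauStarR R z [] → ∀ p, nf R p = z → Γ.TauStar p [] := by
  intro z hz
  induction hz using ReflTransGen.head_induction_on with
  | refl =>
      intro p hp
      exact ground_of_all hRG (nf_eq_nil_iff.mp hp)
  | head hs hrest ih =>
      rename_i x y
      intro p hp
      obtain ⟨γ, δ, hγ, hδ, hstep⟩ := hs
      by_cases hx : x = []
      · exact ground_of_all hRG (nf_eq_nil_iff.mp (hp.trans hx))
      · obtain ⟨c, hpc, hc⟩ := nf_decomp R p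
        obtain ⟨c', hγc, hc'⟩ := nf_decomp R γ
        obtain ⟨Y, g, β, hr, he, rfl⟩ := hstep
        rw [hp] at hpc
        rw [← hγ] at hγc
        match x, hx with
        | X :: t, _ =>
            rw [hγc, List.cons_append] at he
            injection he with he1 he2
            subst he1; subst he2
            have hstep2 : Γ.Step Γ.tau p (g ++ (t ++ c)) :=
              ⟨X, g, t ++ c, hr, by rw [hpc]; simp, rfl⟩
            have hnf : nf R (g ++ (t ++ c)) = y := by
              rw [← List.append_assoc, nf_append_allR hc, hδ, ← List.append_assoc,
                nf_append_allR hc']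
            exact ReflTransGen.head hstep2 (ih _ hnf)

lemma tauStarR_nil_iff (hRG : R ⊆ Γ.GroundC) (p : List C) :
    Γ.TauStarR R (nf R p) [] ↔ Γ.TauStar p [] := by
  constructor
  · intro h; exact tauStar_of_tauStarR_nil hRG _ h p rfl
  · intro h; simpa [nf_nil] using tauStarR_of_tauStar (R := R) h

end Aux2
/-! ### Semi-branching bisimulations over the `R`-transition system -/

/-- Semi-branching bisimulation over the `StepR` transition system, together
with preservation of silent termination. -/
def Semi (Γ : BPA C A) (R : Set C) (r : List C → List C → Prop) : Prop :=
  ∀ ζ η, r ζ η →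
    (Γ.TauStarR R ζ [] → Γ.TauStarR R η []) ∧
    (∀ ζ', Γ.StepR R Γ.tau ζ ζ' →
      ∃ η1, Γ.TauStarR R η η1 ∧ r ζ η1 ∧
        (r ζ' η1 ∨ ∃ η2, Γ.StepR R Γ.tau η1 η2 ∧ r ζ' η2)) ∧
    (∀ a, a ≠ Γ.tau → ∀ ζ', Γ.StepR R a ζ ζ' →
      ∃ η1 η2, Γ.TauStarR R η η1 ∧ r ζ η1 ∧ Γ.StepR R a η1 η2 ∧ r ζ' η2)

/-- The union of all (two-sided) semi-branching bisimulations. -/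
def UU (Γ : BPA C A) (R : Set C) (x y : List C) : Prop :=
  ∃ r, Γ.Semi R r ∧ Γ.Semi R (fun a b => r b a) ∧ r x y

section Semi
variable {C A : Type} {Γ : BPA C A} {R S : Set C}

lemma semi_eq : Γ.Semi R (fun a b => a = b) := by
  intro ζ η h
  subst h
  refine ⟨fun h => h, ?_, ?_⟩
  · intro ζ' hs
    exact ⟨ζ, ReflTransGen.refl, rfl, Or.inr ⟨ζ', hs, rfl⟩⟩
  · intro a _ ζ' hs
    exact ⟨ζ, ζ', ReflTransGen.refl, rfl, hs, rfl⟩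

lemma UU.refl (x : List C) : Γ.UU R x x :=
  ⟨fun a b => a = b, semi_eq, by simpa [eq_comm] using (semi_eq (Γ := Γ) (R := R)), rfl⟩

lemma UU.symm (h : Γ.UU R x y) : Γ.UU R y x := by
  obtain ⟨r, h1, h2, hxy⟩ := h
  exact ⟨fun a b => r b a, h2, h1, hxy⟩

lemma Semi.step_sim (hr : Γ.Semi R r) (hab : r a b) (hs : Γ.StepR R Γ.tau a a') :
    ∃ b', Γ.TauStarR R b b' ∧ r a' b' := by
  obtain ⟨η1, hc, _, hbr⟩ := (hr a b hab).2.1 a' hs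
  cases hbr with
  | inl hh => exact ⟨η1, hc, hh⟩
  | inr hh =>
      obtain ⟨η2, hs2, hr2⟩ := hh
      exact ⟨η2, hc.trans (ReflTransGen.single hs2), hr2⟩

lemma Semi.sim (hr : Γ.Semi R r) (hab : r a b) (h : Γ.TauStarR R a a') :
    ∃ b', Γ.TauStarR R b b' ∧ r a' b' := by
  induction h using ReflTransGen.head_induction_on generalizing b with
  | refl => exact ⟨b, ReflTransGen.refl, hab⟩
  | head hs hrest ih =>
      rename_i x y
      obtain ⟨b1, hb1, hyb1⟩ := hr.step_sim hab hs
      obtain ⟨b', hb', hr'⟩ := ih hyb1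
      exact ⟨b', hb1.trans hb', hr'⟩

lemma semi_comp (h1 : Γ.Semi R r1) (h2 : Γ.Semi R r2) :
    Γ.Semi R (Relation.Comp r1 r2) := by
  rintro a c ⟨b, hab, hbc⟩
  refine ⟨?_, ?_, ?_⟩
  · intro h
    exact (h2 b c hbc).1 ((h1 a b hab).1 h)
  · intro a' hs
    obtain ⟨b1, hb1, hrb1, hbr⟩ := (h1 a b hab).2.1 a' hs
    obtain ⟨c1, hc1, hb1c1⟩ := h2.sim hbc hb1
    cases hbr with
    | inl hstay => exact ⟨c1, hc1, ⟨b1, hrb1, hb1c1⟩, Or.inl ⟨b1, hstay, hb1c1⟩⟩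
    | inr hmove =>
        obtain ⟨b2, hsb, hb2⟩ := hmove
        obtain ⟨c2, hc2, hb1c2, hbr2⟩ := (h2 b1 c1 hb1c1).2.1 b2 hsb
        cases hbr2 with
        | inl hstay2 =>
            exact ⟨c2, hc1.trans hc2, ⟨b1, hrb1, hb1c2⟩, Or.inl ⟨b2, hb2, hstay2⟩⟩
        | inr hmove2 =>
            obtain ⟨c3, hsc, hc3⟩ := hmove2
            exact ⟨c2, hc1.trans hc2, ⟨b1, hrb1, hb1c2⟩, Or.inr ⟨c3, hsc, ⟨b2, hb2, hc3⟩⟩⟩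
  · intro ac hne a' hs
    obtain ⟨b1, b2, hb1, hrb1, hsb, hb2⟩ := (h1 a b hab).2.2 ac hne a' hs
    obtain ⟨c1, hc1, hb1c1⟩ := h2.sim hbc hb1
    obtain ⟨c2, c3, hc2, hb1c2, hsc, hb2c3⟩ := (h2 b1 c1 hb1c1).2.2 ac hne b2 hsb
    exact ⟨c2, c3, hc1.trans hc2, ⟨b1, hrb1, hb1c2⟩, hsc, ⟨b2, hb2, hb2c3⟩⟩

lemma UU.trans (h : Γ.UU R x y) (h' : Γ.UU R y z) : Γ.UU R x z := by
  obtain ⟨r1, h11, h12, hxy⟩ := h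
  obtain ⟨r2, h21, h22, hyz⟩ := h'
  refine ⟨Relation.Comp r1 r2, semi_comp h11 h21, ?_, y, hxy, hyz⟩
  have he : (fun a b => Relation.Comp r1 r2 b a) =
      Relation.Comp (fun a b => r2 b a) (fun a b => r1 b a) := by
    funext a b
    apply propext
    constructor
    · rintro ⟨m, hm1, hm2⟩; exact ⟨m, hm2, hm1⟩
    · rintro ⟨m, hm1, hm2⟩; exact ⟨m, hm2, hm1⟩
  rw [he]
  exact semi_comp h22 h12

lemma semi_UU : Γ.Semi R (Γ.UU R) := by
  rintro ζ η ⟨r, h1, h2, hxy⟩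
  refine ⟨fun h => (h1 ζ η hxy).1 h, ?_, ?_⟩
  · intro ζ' hs
    obtain ⟨η1, hc, hr1, hbr⟩ := (h1 ζ η hxy).2.1 ζ' hs
    refine ⟨η1, hc, ⟨r, h1, h2, hr1⟩, ?_⟩
    cases hbr with
    | inl h => exact Or.inl ⟨r, h1, h2, h⟩
    | inr h =>
        obtain ⟨η2, hs2, hr2⟩ := h
        exact Or.inr ⟨η2, hs2, ⟨r, h1, h2, hr2⟩⟩
  · intro a hne ζ' hs
    obtain ⟨η1, η2, hc, hr1, hs2, hr2⟩ := (h1 ζ η hxy).2.2 a hne ζ' hs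
    exact ⟨η1, η2, hc, ⟨r, h1, h2, hr1⟩, hs2, ⟨r, h1, h2, hr2⟩⟩

lemma Semi.of_symm (hsym : ∀ a b, r a b → r b a) (h : Γ.Semi R r) :
    Γ.Semi R (fun a b => r b a) := by
  intro ζ η hr
  have h' := h ζ η (hsym _ _ hr)
  refine ⟨h'.1, ?_, ?_⟩
  · intro ζ' hs
    obtain ⟨η1, hc, hr1, hbr⟩ := h'.2.1 ζ' hs
    refine ⟨η1, hc, hsym _ _ hr1, ?_⟩
    cases hbr with
    | inl hh => exact Or.inl (hsym _ _ hh)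
    | inr hh =>
        obtain ⟨η2, hs2, hr2⟩ := hh
        exact Or.inr ⟨η2, hs2, hsym _ _ hr2⟩
  · intro a hne ζ' hs
    obtain ⟨η1, η2, hc, hr1, hs2, hr2⟩ := h'.2.2 a hne ζ' hs
    exact ⟨η1, η2, hc, hsym _ _ hr1, hs2, hsym _ _ hr2⟩

lemma UU.le (hs : Γ.Semi R r) (hsym : ∀ a b, r a b → r b a) (h : r x y) :
    Γ.UU R x y :=
  ⟨r, hs, hs.of_symm hsym, h⟩

lemma UU.sim (h : Γ.UU R a b) (hc : Γ.TauStarR R a a') :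
    ∃ b', Γ.TauStarR R b b' ∧ Γ.UU R a' b' :=
  semi_UU.sim h hc

lemma UU.ground (h : Γ.UU R a b) (hg : Γ.TauStarR R a []) : Γ.TauStarR R b [] :=
  (semi_UU a b h).1 hg

/-- Fold a single-step answer of `UU`. -/
lemma UU.step_sim (h : Γ.UU R a b) (hs : Γ.StepR R Γ.tau a a') :
    ∃ b', Γ.TauStarR R b b' ∧ Γ.UU R a' b' := by
  obtain ⟨η1, hc, _, hbr⟩ := (semi_UU a b h).2.1 a' hs
  cases hbr with
  | inl hh => exact ⟨η1, hc, hh⟩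
  | inr hh =>
      obtain ⟨η2, hs2, hr2⟩ := hh
      exact ⟨η2, hc.trans (ReflTransGen.single hs2), hr2⟩

end Semi
section Stutter
variable {C A : Type} {Γ : BPA C A} {R : Set C}

lemma stuttering_aux (h0 : Γ.UU R ζ0 ζn) :
    ∀ x, Γ.TauStarR R ζ0 x → Γ.TauStarR R x ζn → Γ.UU R ζ0 x := by
  classical
  set P : List C → Prop := fun x => Γ.TauStarR R ζ0 x ∧ Γ.TauStarR R x ζn with hP
  set D : List C → List C → Prop :=
    fun a b => Γ.UU R a b ∨ (P a ∧ Γ.UU R ζ0 b) ∨ (P b ∧ Γ.UU R ζ0 a) with hD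
  have hsym : ∀ a b, D a b → D b a := by
    rintro a b (h | ⟨h1, h2⟩ | ⟨h1, h2⟩)
    · exact Or.inl h.symm
    · exact Or.inr (Or.inr ⟨h1, h2⟩)
    · exact Or.inr (Or.inl ⟨h1, h2⟩)
  have hsemi : Γ.Semi R D := by
    rintro a b (hab | ⟨⟨h0a, han⟩, hb⟩ | ⟨hPb, ha⟩)
    · refine ⟨fun h => hab.ground h, ?_, ?_⟩
      · intro a' hs
        obtain ⟨η1, hc, h1, hbr⟩ := (semi_UU a b hab).2.1 a' hs
        refine ⟨η1, hc, Or.inl h1, ?_⟩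
        cases hbr with
        | inl h => exact Or.inl (Or.inl h)
        | inr h => obtain ⟨η2, hs2, h2⟩ := h; exact Or.inr ⟨η2, hs2, Or.inl h2⟩
      · intro c hne a' hs
        obtain ⟨η1, η2, hc, h1, hs2, h2⟩ := (semi_UU a b hab).2.2 c hne a' hs
        exact ⟨η1, η2, hc, Or.inl h1, hs2, Or.inl h2⟩
    · obtain ⟨b1, hb1, hab1⟩ := hb.sim h0a
      refine ⟨?_, ?_, ?_⟩
      · intro h
        exact hb.ground (h0a.trans h)
      · intro a' hs
        obtain ⟨η1, hc, h1, hbr⟩ := (semi_UU a b1 hab1).2.1 a' hs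
        refine ⟨η1, hb1.trans hc, Or.inl h1, ?_⟩
        cases hbr with
        | inl h => exact Or.inl (Or.inl h)
        | inr h => obtain ⟨η2, hs2, h2⟩ := h; exact Or.inr ⟨η2, hs2, Or.inl h2⟩
      · intro c hne a' hs
        obtain ⟨η1, η2, hc, h1, hs2, h2⟩ := (semi_UU a b1 hab1).2.2 c hne a' hs
        exact ⟨η1, η2, hb1.trans hc, Or.inl h1, hs2, Or.inl h2⟩
    · have han : Γ.UU R a ζn := ha.symm.trans h0
      refine ⟨?_, ?_, ?_⟩
      · intro h
        exact hPb.2.trans (h0.ground (ha.symm.ground h))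
      · intro a' hs
        obtain ⟨η1, hc, h1, hbr⟩ := (semi_UU a ζn han).2.1 a' hs
        refine ⟨η1, hPb.2.trans hc, Or.inl h1, ?_⟩
        cases hbr with
        | inl h => exact Or.inl (Or.inl h)
        | inr h => obtain ⟨η2, hs2, h2⟩ := h; exact Or.inr ⟨η2, hs2, Or.inl h2⟩
      · intro c hne a' hs
        obtain ⟨η1, η2, hc, h1, hs2, h2⟩ := (semi_UU a ζn han).2.2 c hne a' hs
        exact ⟨η1, η2, hPb.2.trans hc, Or.inl h1, hs2, Or.inl h2⟩
  intro x hx1 hx2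
  have : Γ.UU R x ζ0 :=
    UU.le hsemi hsym (Or.inr (Or.inl ⟨⟨hx1, hx2⟩, UU.refl ζ0⟩))
  exact this.symm

lemma stuttering (h0 : Γ.UU R ζ0 ζn) (hc : Γ.TauStarR R ζ0 ζn) :
    ReflTransGen (fun x y => Γ.StepR R Γ.tau x y ∧ Γ.UU R ζ0 y) ζ0 ζn := by
  suffices H : ∀ x, Γ.TauStarR R x ζn → Γ.TauStarR R ζ0 x →
      ReflTransGen (fun x y => Γ.StepR R Γ.tau x y ∧ Γ.UU R ζ0 y) x ζn from
    H ζ0 hc ReflTransGen.refl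
  intro x hx
  induction hx using ReflTransGen.head_induction_on with
  | refl => intro _; exact ReflTransGen.refl
  | head hs hrest ih =>
      rename_i u v
      intro h0u
      have h0v : Γ.TauStarR R ζ0 v := h0u.tail hs
      exact ReflTransGen.head ⟨hs, stuttering_aux h0 v h0v hrest⟩ (ih h0v)

end Stutter
section Bridge
variable {C A : Type} {Γ : BPA C A} {R : Set C}

lemma RelChain.to_tauStarR {r : List C → List C → Prop}
    (h : RelChain (Γ.StepR R Γ.tau) r anchor x y) : Γ.TauStarR R x y :=
  ReflTransGen.mono (fun _ _ hh => hh.1) _ _ h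

lemma RelChain.endpoint {r : List C → List C → Prop}
    (h : RelChain (Γ.StepR R Γ.tau) r anchor x y) (hx : r anchor x) : r anchor y := by
  induction h with
  | refl => exact hx
  | tail _ hstep _ => exact hstep.2

lemma rel_nf_self (hr : Γ.IsRBisim R r) (b : List C) : r b (nf R b) :=
  hr.2.1 _ _ (REq_of_nf_eq (by rw [nf_idem]))

/-- From an `R`-bisimulation to the canonical semi-branching bisimilarity. -/
lemma toU (hRG : R ⊆ Γ.GroundC) (hr : Γ.IsRBisim R r) (hab : r α β) :
    Γ.UU R (nf R α) (nf R β) := by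
  classical
  set rt : List C → List C → Prop :=
    fun z w => ∃ a b, r a b ∧ z = nf R a ∧ w = nf R b with hrt
  have hsym : ∀ z w, rt z w → rt w z := by
    rintro z w ⟨a, b, h, rfl, rfl⟩
    exact ⟨b, a, hr.1.symm h, rfl, rfl⟩
  have hsemi : Γ.Semi R rt := by
    rintro z w ⟨a, b, h, rfl, rfl⟩
    refine ⟨?_, ?_, ?_⟩
    · intro hg
      have := (hr.2.2 a b h).1 (tauStar_of_tauStarR_nil hRG _ hg a rfl)
      simpa [nf_nil] using tauStarR_of_tauStar (R := R) this
    · rintro z' ⟨γ, δ, hγ, hδ, hstep⟩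
      have hγa : r γ a := hr.2.1 _ _ (REq_of_nf_eq hγ.symm)
      have hγb : r γ b := hr.1.trans hγa h
      by_cases hgd : r γ δ
      · refine ⟨nf R b, ReflTransGen.refl, ⟨a, b, h, rfl, rfl⟩, Or.inl ?_⟩
        exact ⟨δ, b, hr.1.trans (hr.1.symm hgd) hγb, hδ, rfl⟩
      · obtain ⟨β'', β', hchain, hstep', hneg', hδβ'⟩ :=
          (hr.2.2 γ b hγb).2.1 δ hstep hgd
        have hbβ'' : r b β'' := hchain.endpoint (rel_nf_self hr b)
        have hnfβ'' : nf R β'' = β'' := hchain.to_tauStarR.nf_right (nf_idem R b)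
        refine ⟨β'', hchain.to_tauStarR, ⟨a, β'', hr.1.trans h hbβ'', rfl, hnfβ''.symm⟩,
          Or.inr ⟨β', hstep', ⟨δ, β', hδβ', hδ, hstep'.nf_right.symm⟩⟩⟩
    · rintro c hne z' ⟨γ, δ, hγ, hδ, hstep⟩
      have hγa : r γ a := hr.2.1 _ _ (REq_of_nf_eq hγ.symm)
      have hγb : r γ b := hr.1.trans hγa h
      obtain ⟨β'', β', hchain, hstep', hδβ'⟩ := (hr.2.2 γ b hγb).2.2 c hne δ hstep
      have hbβ'' : r b β'' := hchain.endpoint (rel_nf_self hr b)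
      have hnfβ'' : nf R β'' = β'' := hchain.to_tauStarR.nf_right (nf_idem R b)
      exact ⟨β'', β', hchain.to_tauStarR, ⟨a, β'', hr.1.trans h hbβ'', rfl, hnfβ''.symm⟩,
        hstep', ⟨δ, β', hδβ', hδ, hstep'.nf_right.symm⟩⟩
  exact UU.le hsemi hsym ⟨α, β, hab, rfl, rfl⟩

lemma chain_conv {β : List C} :
    ∀ x y, nf R x = x →
      ReflTransGen (fun u v => Γ.StepR R Γ.tau u v ∧ Γ.UU R (nf R β) v) x y →
      RelChain (Γ.StepR R Γ.tau) (fun p q => Γ.UU R (nf R p) (nf R q)) β x y := by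
  intro x y hx h
  induction h using ReflTransGen.head_induction_on with
  | refl => exact ReflTransGen.refl
  | head hs hrest ih =>
      rename_i u v
      refine ReflTransGen.head ⟨hs.1, ?_⟩ (ih hs.1.nf_right)
      show Γ.UU R (nf R β) (nf R v)
      rw [hs.1.nf_right]
      exact hs.2

/-- The canonical relation induced by `UU` is an `R`-bisimulation. -/
lemma fromU (hRG : R ⊆ Γ.GroundC) :
    Γ.IsRBisim R (fun α β => Γ.UU R (nf R α) (nf R β)) := by
  refine ⟨⟨fun _ => UU.refl _, fun h => h.symm, fun h h' => h.trans h'⟩, ?_, ?_⟩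
  · intro α β h
    rw [nf_eq_of_REq h]
    exact UU.refl _
  · intro α β h
    refine ⟨?_, ?_, ?_⟩
    · intro hg
      have := h.ground (by simpa [nf_nil] using tauStarR_of_tauStar (R := R) hg)
      exact tauStar_of_tauStarR_nil hRG _ this β rfl
    · intro α' hstep hne
      obtain ⟨η1, hch, hαη1, hbr⟩ :=
        (semi_UU _ _ h).2.1 (nf R α') (stepR_of_step hstep)
      cases hbr with
      | inl hstay => exact absurd (hαη1.trans hstay.symm) hne
      | inr hmove =>
          obtain ⟨η2, hs2, hα'η2⟩ := hmove
          have hβη1 : Γ.UU R (nf R β) η1 := h.symm.trans hαη1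
          have hnfη1 : nf R η1 = η1 := hch.nf_right (nf_idem R β)
          refine ⟨η1, η2, chain_conv _ _ (nf_idem R β) (stuttering hβη1 hch), hs2, ?_, ?_⟩
          · show ¬ Γ.UU R (nf R η1) (nf R η2)
            rw [hnfη1, hs2.nf_right]
            intro hu
            exact hne (hαη1.trans (hu.trans hα'η2.symm))
          · show Γ.UU R (nf R α') (nf R η2)
            rw [hs2.nf_right]
            exact hα'η2
    · intro c hne α' hstep
      obtain ⟨η1, η2, hch, hαη1, hs2, hα'η2⟩ :=
        (semi_UU _ _ h).2.2 c hne (nf R α') (stepR_of_step hstep)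
      have hβη1 : Γ.UU R (nf R β) η1 := h.symm.trans hαη1
      refine ⟨η1, η2, chain_conv _ _ (nf_idem R β) (stuttering hβη1 hch), hs2, ?_⟩
      show Γ.UU R (nf R α') (nf R η2)
      rw [hs2.nf_right]
      exact hα'η2

lemma rbisim_iff (hRG : R ⊆ Γ.GroundC) :
    Γ.RBisim R α β ↔ Γ.UU R (nf R α) (nf R β) := by
  constructor
  · rintro ⟨r, hr, hab⟩; exact toU hRG hr hab
  · intro h; exact ⟨_, fromU hRG, h⟩

end Bridge
section Mono
variable {C A : Type} {Γ : BPA C A} {R S : Set C}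

/-- Monotonicity: the canonical relation grows with the reference set. -/
lemma mono_UU (hRS : R ⊆ S) (hRG : R ⊆ Γ.GroundC) (hSG : S ⊆ Γ.GroundC)
    (h : Γ.UU R (nf R p) (nf R q)) : Γ.UU S (nf S p) (nf S q) := by
  classical
  set M : List C → List C → Prop :=
    fun z w => ∃ p q, Γ.UU R (nf R p) (nf R q) ∧ z = nf S p ∧ w = nf S q with hM
  have hsym : ∀ z w, M z w → M w z := by
    rintro z w ⟨p, q, hU, rfl, rfl⟩
    exact ⟨q, p, hU.symm, rfl, rfl⟩
  have hsemi : Γ.Semi S M := by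
    rintro z w ⟨p, q, hU, rfl, rfl⟩
    have hground : Γ.TauStar p [] → Γ.TauStarR S (nf S q) [] := by
      intro hg
      have h1 : Γ.TauStarR R (nf R p) [] := by
        simpa [nf_nil] using tauStarR_of_tauStar (R := R) hg
      have h2 := tauStar_of_tauStarR_nil hRG _ (hU.ground h1) q rfl
      simpa [nf_nil] using tauStarR_of_tauStar (R := S) h2
    refine ⟨?_, ?_, ?_⟩
    · intro hg
      exact hground (tauStar_of_tauStarR_nil hSG _ hg p rfl)
    · rintro z' ⟨γ, δ, hγ, hδ, hstep⟩
      rcases hcase : nf S p with _ | ⟨Y, t⟩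
      · -- phantom challenge from the empty normal form
        have hgq : Γ.TauStarR S (nf S q) [] :=
          hground (ground_of_all hSG (nf_eq_nil_iff.mp hcase))
        refine ⟨[], hgq, ⟨[], [], UU.refl _, (nf_nil S).symm, (nf_nil S).symm⟩, Or.inr ?_⟩
        exact ⟨z', ⟨γ, δ, hcase.symm.trans hγ, hδ, hstep⟩, ⟨δ, δ, UU.refl _, hδ, hδ⟩⟩
      · -- real challenge
        obtain ⟨d, hp, hd⟩ := nf_decomp S p
        obtain ⟨c', hγ', hc'⟩ := nf_decomp S γ
        rw [← hγ, hcase] at hγ'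
        obtain ⟨X, g, β0, hrule, hγe, hδe⟩ := hstep
        rw [hγ', List.cons_append] at hγe
        injection hγe with he1 he2
        subst he1
        have hstep2 : Γ.Step Γ.tau p (g ++ (t ++ d)) :=
          ⟨Y, g, t ++ d, hrule, by rw [hp, hcase, List.cons_append], rfl⟩
        have hz' : nf S (g ++ (t ++ d)) = z' := by
          rw [hδ, hδe, ← he2, ← List.append_assoc, ← List.append_assoc,
            nf_append_allR hc', nf_append_allR hd]
        obtain ⟨κ1, hch, hκ1, hbr⟩ :=
          (semi_UU _ _ hU).2.1 (nf R (g ++ (t ++ d))) (stepR_of_step hstep2)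
        have hκnf : nf R κ1 = κ1 := hch.nf_right (nf_idem R q)
        have hchS : Γ.TauStarR S (nf S q) (nf S κ1) := by
          have := tauStarR_proj hRS hch
          rwa [nf_nf hRS] at this
        refine ⟨nf S κ1, hchS, ⟨p, κ1, by rwa [hκnf], hcase.symm, rfl⟩, ?_⟩
        cases hbr with
        | inl hstay =>
            exact Or.inl ⟨g ++ (t ++ d), κ1, by rwa [hκnf], hz'.symm, rfl⟩
        | inr hmove =>
            obtain ⟨κ2, hsκ, hκ2⟩ := hmove
            refine Or.inr ⟨nf S κ2, stepR_proj hRS hsκ, ?_⟩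
            exact ⟨g ++ (t ++ d), κ2, by rwa [hsκ.nf_right], hz'.symm, rfl⟩
    · rintro a hne z' ⟨γ, δ, hγ, hδ, hstep⟩
      rcases hcase : nf S p with _ | ⟨Y, t⟩
      · have hgq : Γ.TauStarR S (nf S q) [] :=
          hground (ground_of_all hSG (nf_eq_nil_iff.mp hcase))
        exact ⟨[], z', hgq, ⟨[], [], UU.refl _, (nf_nil S).symm, (nf_nil S).symm⟩,
          ⟨γ, δ, hcase.symm.trans hγ, hδ, hstep⟩, ⟨δ, δ, UU.refl _, hδ, hδ⟩⟩
      · obtain ⟨d, hp, hd⟩ := nf_decomp S p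
        obtain ⟨c', hγ', hc'⟩ := nf_decomp S γ
        rw [← hγ, hcase] at hγ'
        obtain ⟨X, g, β0, hrule, hγe, hδe⟩ := hstep
        rw [hγ', List.cons_append] at hγe
        injection hγe with he1 he2
        subst he1
        have hstep2 : Γ.Step a p (g ++ (t ++ d)) :=
          ⟨Y, g, t ++ d, hrule, by rw [hp, hcase, List.cons_append], rfl⟩
        have hz' : nf S (g ++ (t ++ d)) = z' := by
          rw [hδ, hδe, ← he2, ← List.append_assoc, ← List.append_assoc,
            nf_append_allR hc', nf_append_allR hd]
        obtain ⟨κ1, κ2, hch, hκ1, hsκ, hκ2⟩ :=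
          (semi_UU _ _ hU).2.2 a hne (nf R (g ++ (t ++ d))) (stepR_of_step hstep2)
        have hκnf : nf R κ1 = κ1 := hch.nf_right (nf_idem R q)
        have hchS : Γ.TauStarR S (nf S q) (nf S κ1) := by
          have := tauStarR_proj hRS hch
          rwa [nf_nf hRS] at this
        exact ⟨nf S κ1, nf S κ2, hchS, ⟨p, κ1, by rwa [hκnf], hcase.symm, rfl⟩,
          stepR_proj hRS hsκ,
          ⟨g ++ (t ++ d), κ2, by rwa [hsκ.nf_right], hz'.symm, rfl⟩⟩
  exact UU.le hsemi hsym ⟨p, q, h, rfl, rfl⟩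

end Mono
section Absorb
variable {C A : Type} {Γ : BPA C A} {R : Set C}

lemma stepR_src_elim (h : Γ.StepR R ℓ z z') (hz : z = Y :: t) :
    ∃ g, (Y, ℓ, g) ∈ Γ.rules ∧ z' = nf R (g ++ t) := by
  obtain ⟨γ, δ, hγ, hδ, X0, g, β0, hrule, hγe, hδe⟩ := h
  obtain ⟨c, hγc, hc⟩ := nf_decomp R γ
  rw [← hγ, hz, List.cons_append] at hγc
  rw [hγc] at hγe
  injection hγe with he1 he2
  subst he1
  refine ⟨g, hrule, ?_⟩
  rw [hδ, hδe, ← he2, ← List.append_assoc, nf_append_allR hc]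

lemma stepR_intro_cons (hz : nf R z = z) (hzf : z = Y :: t)
    (hrule : (Y, ℓ, g) ∈ Γ.rules) : Γ.StepR R ℓ z (nf R (g ++ t)) :=
  ⟨z, g ++ t, hz.symm, rfl, Y, g, t, hrule, hzf, rfl⟩

lemma nf_single (hX : X ∉ R) : nf R [X] = [X] := by
  obtain ⟨c, hx, hc⟩ := nf_decomp R [X]
  rcases h : nf R [X] with _ | ⟨a, l⟩
  · exact absurd (nf_eq_nil_iff.mp h X (by simp)) hX
  · rw [h, List.cons_append] at hx
    injection hx with he1 he2
    obtain ⟨h1, h2⟩ := List.append_eq_nil_iff.mp he2.symm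
    rw [he1, h1]

lemma nf_append_single (hX : X ∉ R) (u : List C) :
    nf R (u ++ [X]) = u ++ [X] := by
  rw [nf_append_nonnil (v := [X]) (by rw [nf_single hX]; simp) u, nf_single hX]

/-- Absorption of a single constant that is `UU`-equal to `ε`. -/
lemma absorb1 (hRG : R ⊆ Γ.GroundC) (hX : Γ.UU R (nf R [X]) []) (u : List C) :
    Γ.UU R (nf R (u ++ [X])) (nf R u) := by
  classical
  by_cases hXR : X ∈ R
  · rw [nf_append_allR (by simpa using hXR)]
    exact UU.refl _
  have hX' : Γ.UU R [X] [] := by rwa [nf_single hXR] at hX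
  set A1 : List C → List C → Prop := fun z w => Γ.UU R z w ∨
    (∃ u, z = u ++ [X] ∧ w = nf R u) ∨ (∃ u, w = u ++ [X] ∧ z = nf R u) with hA1
  have hsym : ∀ z w, A1 z w → A1 w z := by
    rintro z w (h | ⟨u, h1, h2⟩ | ⟨u, h1, h2⟩)
    · exact Or.inl h.symm
    · exact Or.inr (Or.inr ⟨u, h1, h2⟩)
    · exact Or.inr (Or.inl ⟨u, h1, h2⟩)
  have hXground : Γ.TauStarR R [X] [] := hX'.symm.ground ReflTransGen.refl
  have hwchain : ∀ u : List C, (∀ Y ∈ u, Y ∈ R) → Γ.TauStarR R (u ++ [X]) [X] := by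
    intro u hu
    have h1 : Γ.TauStar (u ++ [X]) [X] := by
      simpa using (ground_of_all hRG hu).append [X]
    have := tauStarR_of_tauStar (R := R) h1
    rwa [nf_append_single hXR, nf_single hXR] at this
  have hsemi : Γ.Semi R A1 := by
    rintro z w (h | ⟨u, rfl, rfl⟩ | ⟨u, rfl, rfl⟩)
    · refine ⟨fun hg => h.ground hg, ?_, ?_⟩
      · intro z' hs
        obtain ⟨η1, hc, h1, hbr⟩ := (semi_UU _ _ h).2.1 z' hs
        refine ⟨η1, hc, Or.inl h1, ?_⟩
        cases hbr with
        | inl hh => exact Or.inl (Or.inl hh)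
        | inr hh => obtain ⟨η2, hs2, h2⟩ := hh; exact Or.inr ⟨η2, hs2, Or.inl h2⟩
      · intro a hne z' hs
        obtain ⟨η1, η2, hc, h1, hs2, h2⟩ := (semi_UU _ _ h).2.2 a hne z' hs
        exact ⟨η1, η2, hc, Or.inl h1, hs2, Or.inl h2⟩
    · -- pairs (u ++ [X], nf u)
      refine ⟨?_, ?_, ?_⟩
      · intro hg
        have h1 : Γ.TauStar (u ++ [X]) [] :=
          tauStar_of_tauStarR_nil hRG _ hg (u ++ [X]) (nf_append_single hXR u)
        have h2 := (tauStar_decomp h1).1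
        simpa [nf_nil] using tauStarR_of_tauStar (R := R) h2
      · intro z' hs
        match u with
        | [] =>
            obtain ⟨η1, hc, h1, hbr⟩ := (semi_UU _ _ hX').2.1 z' (by simpa using hs)
            refine ⟨η1, by simpa [nf_nil] using hc, Or.inl (by simpa using h1), ?_⟩
            cases hbr with
            | inl hh => exact Or.inl (Or.inl hh)
            | inr hh => obtain ⟨η2, hs2, h2⟩ := hh; exact Or.inr ⟨η2, hs2, Or.inl h2⟩
        | Y :: ut =>
            obtain ⟨g, hrule, hz'⟩ := stepR_src_elim hs rfl
            have hz'2 : z' = (g ++ ut) ++ [X] := by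
              rw [hz']
              show nf R (g ++ (ut ++ [X])) = (g ++ ut) ++ [X]
              rw [← List.append_assoc, nf_append_single hXR]
            refine ⟨nf R (Y :: ut), ReflTransGen.refl,
              Or.inr (Or.inl ⟨Y :: ut, rfl, rfl⟩), Or.inr ?_⟩
            by_cases hw : nf R (Y :: ut) = []
            · have hallR : ∀ Z ∈ Y :: ut, Z ∈ R := nf_eq_nil_iff.mp hw
              have hstep2 : Γ.StepR R Γ.tau (nf R (Y :: ut)) (nf R (g ++ ut)) :=
                ⟨Y :: ut, g ++ ut, rfl, rfl, Y, g, ut, hrule, rfl, rfl⟩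
              exact ⟨nf R (g ++ ut), hstep2, Or.inr (Or.inl ⟨g ++ ut, hz'2, rfl⟩)⟩
            · obtain ⟨Y', wt, hwc⟩ := List.exists_cons_of_ne_nil hw
              obtain ⟨c2, hu2, hc2⟩ := nf_decomp R (Y :: ut)
              rw [hwc, List.cons_append] at hu2
              injection hu2 with hu21 hu22
              subst hu21
              have hstep2 := stepR_intro_cons (nf_idem R (Y :: ut)) hwc hrule
              refine ⟨nf R (g ++ wt), hstep2, Or.inr (Or.inl ⟨g ++ ut, hz'2, ?_⟩)⟩
              rw [hu22, ← List.append_assoc, nf_append_allR hc2]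
      · intro a hne z' hs
        match u with
        | [] =>
            obtain ⟨η1, η2, hc, h1, hs2, h2⟩ :=
              (semi_UU _ _ hX').2.2 a hne z' (by simpa using hs)
            exact ⟨η1, η2, by simpa [nf_nil] using hc, Or.inl (by simpa using h1),
              hs2, Or.inl h2⟩
        | Y :: ut =>
            obtain ⟨g, hrule, hz'⟩ := stepR_src_elim hs rfl
            have hz'2 : z' = (g ++ ut) ++ [X] := by
              rw [hz']
              show nf R (g ++ (ut ++ [X])) = (g ++ ut) ++ [X]
              rw [← List.append_assoc, nf_append_single hXR]
            by_cases hw : nf R (Y :: ut) = []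
            · refine ⟨nf R (Y :: ut), nf R (g ++ ut),
                ReflTransGen.refl, Or.inr (Or.inl ⟨Y :: ut, rfl, rfl⟩),
                ⟨Y :: ut, g ++ ut, rfl, rfl, Y, g, ut, hrule, rfl, rfl⟩,
                Or.inr (Or.inl ⟨g ++ ut, hz'2, rfl⟩)⟩
            · obtain ⟨Y', wt, hwc⟩ := List.exists_cons_of_ne_nil hw
              obtain ⟨c2, hu2, hc2⟩ := nf_decomp R (Y :: ut)
              rw [hwc, List.cons_append] at hu2
              injection hu2 with hu21 hu22
              subst hu21
              refine ⟨nf R (Y :: ut), nf R (g ++ wt), ReflTransGen.refl,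
                Or.inr (Or.inl ⟨Y :: ut, rfl, rfl⟩),
                stepR_intro_cons (nf_idem R (Y :: ut)) hwc hrule,
                Or.inr (Or.inl ⟨g ++ ut, hz'2, ?_⟩)⟩
              rw [hu22, ← List.append_assoc, nf_append_allR hc2]
    · -- pairs (nf u, u ++ [X])
      have hGr : Γ.TauStarR R (nf R u) [] → Γ.TauStarR R (u ++ [X]) [] := by
        intro hg
        have h1 : Γ.TauStar u [] := tauStar_of_tauStarR_nil hRG _ hg u rfl
        have h2 : Γ.TauStarR R (u ++ [X]) [X] := by
          have := tauStarR_of_tauStar (R := R) (by simpa using h1.append [X])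
          rwa [nf_append_single hXR, nf_single hXR] at this
        exact h2.trans hXground
      refine ⟨hGr, ?_, ?_⟩
      · intro z' hs
        by_cases hnil : nf R u = []
        · have hchain : Γ.TauStarR R (u ++ [X]) [X] :=
            hwchain u (nf_eq_nil_iff.mp hnil)
          have hs' : Γ.StepR R Γ.tau [] z' := by rwa [hnil] at hs
          obtain ⟨η1, hc, h1, hbr⟩ := (semi_UU _ _ hX'.symm).2.1 z' hs'
          refine ⟨η1, hchain.trans hc, Or.inl (by rwa [hnil]), ?_⟩
          cases hbr with
          | inl hh => exact Or.inl (Or.inl hh)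
          | inr hh => obtain ⟨η2, hs2, h2⟩ := hh; exact Or.inr ⟨η2, hs2, Or.inl h2⟩
        · obtain ⟨Y, wt, hwc⟩ := List.exists_cons_of_ne_nil hnil
          obtain ⟨g, hrule, hz'⟩ := stepR_src_elim hs hwc
          obtain ⟨c2, hu2, hc2⟩ := nf_decomp R u
          rw [hwc, List.cons_append] at hu2
          have hwf : u ++ [X] = Y :: ((wt ++ c2) ++ [X]) := by
            rw [hu2]; simp
          have hstep2 := stepR_intro_cons (nf_append_single hXR u) hwf hrule
          refine ⟨u ++ [X], ReflTransGen.refl,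
            Or.inr (Or.inr ⟨u, rfl, rfl⟩), Or.inr ?_⟩
          refine ⟨nf R (g ++ ((wt ++ c2) ++ [X])), hstep2,
            Or.inr (Or.inr ⟨g ++ (wt ++ c2), ?_, ?_⟩)⟩
          · rw [← List.append_assoc, nf_append_single hXR]
          · rw [hz', ← List.append_assoc, nf_append_allR hc2]
      · intro a hne z' hs
        by_cases hnil : nf R u = []
        · have hchain : Γ.TauStarR R (u ++ [X]) [X] :=
            hwchain u (nf_eq_nil_iff.mp hnil)
          have hs' : Γ.StepR R a [] z' := by rwa [hnil] at hs
          obtain ⟨η1, η2, hc, h1, hs2, h2⟩ := (semi_UU _ _ hX'.symm).2.2 a hne z' hs'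
          exact ⟨η1, η2, hchain.trans hc, Or.inl (by rwa [hnil]), hs2, Or.inl h2⟩
        · obtain ⟨Y, wt, hwc⟩ := List.exists_cons_of_ne_nil hnil
          obtain ⟨g, hrule, hz'⟩ := stepR_src_elim hs hwc
          obtain ⟨c2, hu2, hc2⟩ := nf_decomp R u
          rw [hwc, List.cons_append] at hu2
          have hwf : u ++ [X] = Y :: ((wt ++ c2) ++ [X]) := by
            rw [hu2]; simp
          have hstep2 := stepR_intro_cons (nf_append_single hXR u) hwf hrule
          refine ⟨u ++ [X], nf R (g ++ ((wt ++ c2) ++ [X])), ReflTransGen.refl,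
            Or.inr (Or.inr ⟨u, rfl, rfl⟩), hstep2,
            Or.inr (Or.inr ⟨g ++ (wt ++ c2), ?_, ?_⟩)⟩
          · rw [← List.append_assoc, nf_append_single hXR]
          · rw [hz', ← List.append_assoc, nf_append_allR hc2]
  exact UU.le hsemi hsym (Or.inr (Or.inl ⟨u, nf_append_single hXR u, rfl⟩))

/-- Absorption of a ground suffix of `ε`-equivalent constants. -/
lemma absorb (hRG : R ⊆ Γ.GroundC) {s : List C}
    (hs : ∀ Y ∈ s, Γ.UU R (nf R [Y]) []) (u : List C) :
    Γ.UU R (nf R (u ++ s)) (nf R u) := by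
  induction s using List.reverseRecOn generalizing u with
  | nil => simpa using UU.refl (nf R u)
  | append_singleton s0 Y ih =>
      have h1 : Γ.UU R (nf R ((u ++ s0) ++ [Y])) (nf R (u ++ s0)) :=
        absorb1 hRG (hs Y (by simp)) (u ++ s0)
      have h2 := ih (fun Z hZ => hs Z (by simp [hZ])) u
      rw [← List.append_assoc]
      exact h1.trans h2

end Absorb
section Down
variable {C A : Type} {Γ : BPA C A} {R S : Set C}

variable (hRS : R ⊆ S) (hRG : R ⊆ Γ.GroundC) (hSG : S ⊆ Γ.GroundC)
  (hId : ∀ Y ∈ S, Γ.UU R (nf R [Y]) [])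

include hRG hId in
lemma absorbS (v : List C) : Γ.UU R (nf R v) (nf R (nf S v)) := by
  obtain ⟨c, hv, hc⟩ := nf_decomp S v
  conv_lhs => rw [hv]
  exact absorb hRG (fun Y hY => hId Y (hc Y hY)) (nf S v)

include hRG hId in
lemma liftStepTau (hs : Γ.StepR S Γ.tau x x') (h : Γ.UU R (nf R x) w) :
    ∃ w1, Γ.TauStarR R w w1 ∧ Γ.UU R (nf R x) w1 ∧
      (Γ.UU R (nf R x') w1 ∨
        ∃ w2, Γ.StepR R Γ.tau w1 w2 ∧ Γ.UU R (nf R x') w2) := by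
  obtain ⟨γ0, δ0, hγ0, hδ0, hstep⟩ := hs
  have habγ : Γ.UU R (nf R γ0) (nf R x) := by
    rw [hγ0]; exact absorbS hRG hId γ0
  have habδ : Γ.UU R (nf R x') (nf R δ0) := by
    rw [hδ0]; exact (absorbS hRG hId δ0).symm
  obtain ⟨w1, hc, h1, hbr⟩ :=
    (semi_UU _ _ (habγ.trans h)).2.1 (nf R δ0) (stepR_of_step hstep)
  refine ⟨w1, hc, habγ.symm.trans h1, ?_⟩
  cases hbr with
  | inl hh => exact Or.inl (habδ.trans hh)
  | inr hh =>
      obtain ⟨w2, hsw, h2⟩ := hh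
      exact Or.inr ⟨w2, hsw, habδ.trans h2⟩

include hRG hId in
lemma liftStepTau' (hs : Γ.StepR S Γ.tau x x') (h : Γ.UU R (nf R x) w) :
    ∃ w', Γ.TauStarR R w w' ∧ Γ.UU R (nf R x') w' := by
  obtain ⟨w1, hc, _, hbr⟩ := liftStepTau hRG hId hs h
  cases hbr with
  | inl hh => exact ⟨w1, hc, hh⟩
  | inr hh =>
      obtain ⟨w2, hsw, h2⟩ := hh
      exact ⟨w2, hc.trans (ReflTransGen.single hsw), h2⟩

include hRG hId in
lemma liftStepVis (hne : a ≠ Γ.tau) (hs : Γ.StepR S a x x') (h : Γ.UU R (nf R x) w) :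
    ∃ w1 w2, Γ.TauStarR R w w1 ∧ Γ.UU R (nf R x) w1 ∧
      Γ.StepR R a w1 w2 ∧ Γ.UU R (nf R x') w2 := by
  obtain ⟨γ0, δ0, hγ0, hδ0, hstep⟩ := hs
  have habγ : Γ.UU R (nf R γ0) (nf R x) := by
    rw [hγ0]; exact absorbS hRG hId γ0
  have habδ : Γ.UU R (nf R x') (nf R δ0) := by
    rw [hδ0]; exact (absorbS hRG hId δ0).symm
  obtain ⟨w1, w2, hc, h1, hsw, h2⟩ :=
    (semi_UU _ _ (habγ.trans h)).2.2 a hne (nf R δ0) (stepR_of_step hstep)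
  exact ⟨w1, w2, hc, habγ.symm.trans h1, hsw, habδ.trans h2⟩

include hRG hId in
lemma liftChain (hch : Γ.TauStarR S x0 x) :
    ∀ w, Γ.UU R (nf R x0) w → ∃ w', Γ.TauStarR R w w' ∧ Γ.UU R (nf R x) w' := by
  induction hch using ReflTransGen.head_induction_on with
  | refl => exact fun w h => ⟨w, ReflTransGen.refl, h⟩
  | head hs hrest ih =>
      intro w h
      obtain ⟨wa, hwa, hUa⟩ := liftStepTau' hRG hId hs h
      obtain ⟨w', hw', hU'⟩ := ih wa hUa
      exact ⟨w', hwa.trans hw', hU'⟩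

include hRS hRG hSG hId in
lemma crossOneB (hmid : Γ.UU S (nf S γ) (nf S q)) (hright : Γ.UU R (nf R q) w)
    (hstep : Γ.Step Γ.tau γ δ) :
    ∃ q' w', Γ.UU S (nf S δ) (nf S q') ∧ Γ.UU R (nf R q') w' ∧ Γ.TauStarR R w w' := by
  obtain ⟨x1, hcS, h1, hbr⟩ :=
    (semi_UU _ _ hmid).2.1 (nf S δ) (stepR_of_step hstep)
  obtain ⟨wa, hwa, hUa⟩ :=
    liftChain hRG hId hcS _ ((absorbS hRG hId q).symm.trans hright)
  have hx1nf : nf S x1 = x1 := hcS.nf_right (nf_idem S q)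
  cases hbr with
  | inl hstay => exact ⟨x1, wa, by rwa [hx1nf], hUa, hwa⟩
  | inr hh =>
      obtain ⟨x2, hs2, h2⟩ := hh
      obtain ⟨w', hw', hU'⟩ := liftStepTau' hRG hId hs2 hUa
      exact ⟨x2, w', by rwa [hs2.nf_right], hU', hwa.trans hw'⟩

include hRS hRG hSG hId in
lemma crossChainB :
    ∀ κ0 κ, Γ.TauStarR R κ0 κ → ∀ p q w, nf R p = κ0 →
      Γ.UU S (nf S p) (nf S q) → Γ.UU R (nf R q) w →
      ∃ p1 q1 w1, nf R p1 = κ ∧ Γ.UU S (nf S p1) (nf S q1) ∧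
        Γ.UU R (nf R q1) w1 ∧ Γ.TauStarR R w w1 := by
  intro κ0 κ hch
  induction hch using ReflTransGen.head_induction_on with
  | refl => exact fun p q w hp hmid hright => ⟨p, q, w, hp, hmid, hright, ReflTransGen.refl⟩
  | head hs hrest ih =>
      rename_i x y
      intro p q w hp hmid hright
      obtain ⟨γ1, δ1, hγ1, hδ1, hstep1⟩ := hs
      have hmidγ : Γ.UU S (nf S γ1) (nf S q) := by
        have : nf S γ1 = nf S p := by
          rw [← nf_nf hRS γ1, ← hγ1, ← hp, nf_nf hRS]
        rwa [this]
      obtain ⟨q', w', hmid', hright', hw⟩ := crossOneB hRS hRG hSG hId hmidγ hright hstep1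
      obtain ⟨p1, q1, w1, hp1, hm1, hr1, hw1⟩ := ih δ1 q' w' hδ1.symm hmid' hright'
      exact ⟨p1, q1, w1, hp1, hm1, hr1, hw.trans hw1⟩

include hRS hRG hSG hId in
lemma crossStepTauB (hmid : Γ.UU S (nf S γ) (nf S q)) (hright : Γ.UU R (nf R q) w)
    (hstep : Γ.Step Γ.tau γ δ) :
    ∃ w1, Γ.TauStarR R w w1 ∧
      (∃ qp, Γ.UU S (nf S γ) (nf S qp) ∧ Γ.UU R (nf R qp) w1) ∧
      ((∃ qq, Γ.UU S (nf S δ) (nf S qq) ∧ Γ.UU R (nf R qq) w1) ∨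
        (∃ w2 qq, Γ.StepR R Γ.tau w1 w2 ∧ Γ.UU S (nf S δ) (nf S qq) ∧
          Γ.UU R (nf R qq) w2)) := by
  obtain ⟨x1, hcS, h1, hbr⟩ :=
    (semi_UU _ _ hmid).2.1 (nf S δ) (stepR_of_step hstep)
  obtain ⟨wa, hwa, hUa⟩ :=
    liftChain hRG hId hcS _ ((absorbS hRG hId q).symm.trans hright)
  have hx1nf : nf S x1 = x1 := hcS.nf_right (nf_idem S q)
  have hpre : Γ.UU S (nf S γ) (nf S x1) := by rwa [hx1nf]
  cases hbr with
  | inl hstay =>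
      exact ⟨wa, hwa, ⟨x1, hpre, hUa⟩, Or.inl ⟨x1, by rwa [hx1nf], hUa⟩⟩
  | inr hh =>
      obtain ⟨x2, hs2, h2⟩ := hh
      obtain ⟨wb, hwb, hUb, hbr2⟩ := liftStepTau hRG hId hs2 hUa
      have hpost : Γ.UU S (nf S δ) (nf S x2) := by rwa [hs2.nf_right]
      cases hbr2 with
      | inl hh2 =>
          exact ⟨wb, hwa.trans hwb, ⟨x1, hpre, hUb⟩, Or.inl ⟨x2, hpost, hh2⟩⟩
      | inr hh2 =>
          obtain ⟨w2, hsw, hUw2⟩ := hh2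
          exact ⟨wb, hwa.trans hwb, ⟨x1, hpre, hUb⟩,
            Or.inr ⟨w2, x2, hsw, hpost, hUw2⟩⟩

include hRS hRG hSG hId in
lemma crossStepVisB (hne : a ≠ Γ.tau) (hmid : Γ.UU S (nf S γ) (nf S q))
    (hright : Γ.UU R (nf R q) w) (hstep : Γ.Step a γ δ) :
    ∃ w1 w2, Γ.TauStarR R w w1 ∧
      (∃ qp, Γ.UU S (nf S γ) (nf S qp) ∧ Γ.UU R (nf R qp) w1) ∧
      Γ.StepR R a w1 w2 ∧
      (∃ qq, Γ.UU S (nf S δ) (nf S qq) ∧ Γ.UU R (nf R qq) w2) := by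
  obtain ⟨x1, x2, hcS, h1, hs2, h2⟩ :=
    (semi_UU _ _ hmid).2.2 a hne (nf S δ) (stepR_of_step hstep)
  obtain ⟨wa, hwa, hUa⟩ :=
    liftChain hRG hId hcS _ ((absorbS hRG hId q).symm.trans hright)
  have hx1nf : nf S x1 = x1 := hcS.nf_right (nf_idem S q)
  obtain ⟨wb, w2, hwb, hUb, hsw, hUw2⟩ := liftStepVis hRG hId hne hs2 hUa
  exact ⟨wb, w2, hwa.trans hwb, ⟨x1, by rwa [hx1nf], hUb⟩, hsw,
    ⟨x2, by rwa [hs2.nf_right], hUw2⟩⟩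

include hRS hRG hSG hId in
/-- Transfer of the canonical relation down from `S` to `R` when `S ⊆ Id_R`. -/
lemma down_UU (h : Γ.UU S (nf S α) (nf S β)) : Γ.UU R (nf R α) (nf R β) := by
  classical
  set G : List C → List C → Prop := fun z w => ∃ p q,
    Γ.UU R z (nf R p) ∧ Γ.UU S (nf S p) (nf S q) ∧ Γ.UU R (nf R q) w with hG
  have hsym : ∀ z w, G z w → G w z := by
    rintro z w ⟨p, q, h1, h2, h3⟩
    exact ⟨q, p, h3.symm, h2.symm, h1.symm⟩
  have hsemi : Γ.Semi R G := by
    rintro z w ⟨p, q, h1, h2, h3⟩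
    refine ⟨?_, ?_, ?_⟩
    · intro hg
      have hp : Γ.TauStar p [] :=
        tauStar_of_tauStarR_nil hRG _ (h1.ground hg) p rfl
      have hpS : Γ.TauStarR S (nf S p) [] := by
        simpa [nf_nil] using tauStarR_of_tauStar (R := S) hp
      have hq : Γ.TauStar q [] :=
        tauStar_of_tauStarR_nil hSG _ (h2.ground hpS) q rfl
      have hqR : Γ.TauStarR R (nf R q) [] := by
        simpa [nf_nil] using tauStarR_of_tauStar (R := R) hq
      exact h3.ground hqR
    · intro z' hs
      obtain ⟨κ1, hch, hκ1, hbr⟩ := (semi_UU _ _ h1).2.1 z' hs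
      obtain ⟨p1, q1, w1, hp1, hmid1, hright1, hw1⟩ :=
        crossChainB hRS hRG hSG hId _ _ hch p q w rfl h2 h3
      cases hbr with
      | inl hstay =>
          refine ⟨w1, hw1, ⟨p1, q1, by rwa [hp1], hmid1, hright1⟩,
            Or.inl ⟨p1, q1, by rwa [hp1], hmid1, hright1⟩⟩
      | inr hh =>
          obtain ⟨κ2, hsκ, hκ2⟩ := hh
          obtain ⟨γ1, δ1, hγ1, hδ1, hstep1⟩ := hsκ
          have hmidγ : Γ.UU S (nf S γ1) (nf S q1) := by
            have : nf S γ1 = nf S p1 := by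
              rw [← nf_nf hRS γ1, ← hγ1, ← hp1, nf_nf hRS]
            rwa [this]
          obtain ⟨wb, hwb, ⟨qp, hqp1, hqp2⟩, hpost⟩ :=
            crossStepTauB hRS hRG hSG hId hmidγ hright1 hstep1
          have hzγ1 : Γ.UU R z (nf R γ1) := by rwa [← hγ1]
          have hz'δ1 : Γ.UU R z' (nf R δ1) := by rwa [← hδ1]
          refine ⟨wb, hw1.trans hwb, ⟨γ1, qp, hzγ1, hqp1, hqp2⟩, ?_⟩
          cases hpost with
          | inl hh2 =>
              obtain ⟨qq, hqq1, hqq2⟩ := hh2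
              exact Or.inl ⟨δ1, qq, hz'δ1, hqq1, hqq2⟩
          | inr hh2 =>
              obtain ⟨w2, qq, hsw, hqq1, hqq2⟩ := hh2
              exact Or.inr ⟨w2, hsw, ⟨δ1, qq, hz'δ1, hqq1, hqq2⟩⟩
    · intro a hne z' hs
      obtain ⟨κ1, κ2, hch, hκ1, hsκ, hκ2⟩ := (semi_UU _ _ h1).2.2 a hne z' hs
      obtain ⟨p1, q1, w1, hp1, hmid1, hright1, hw1⟩ :=
        crossChainB hRS hRG hSG hId _ _ hch p q w rfl h2 h3
      obtain ⟨γ1, δ1, hγ1, hδ1, hstep1⟩ := hsκ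
      have hmidγ : Γ.UU S (nf S γ1) (nf S q1) := by
        have : nf S γ1 = nf S p1 := by
          rw [← nf_nf hRS γ1, ← hγ1, ← hp1, nf_nf hRS]
        rwa [this]
      obtain ⟨wb, w2, hwb, ⟨qp, hqp1, hqp2⟩, hsw, ⟨qq, hqq1, hqq2⟩⟩ :=
        crossStepVisB hRS hRG hSG hId hne hmidγ hright1 hstep1
      have hzγ1 : Γ.UU R z (nf R γ1) := by rwa [← hγ1]
      have hz'δ1 : Γ.UU R z' (nf R δ1) := by rwa [← hδ1]
      exact ⟨wb, w2, hw1.trans hwb, ⟨γ1, qp, hzγ1, hqp1, hqp2⟩, hsw,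
        ⟨δ1, qq, hz'δ1, hqq1, hqq2⟩⟩
  exact UU.le hsemi hsym ⟨α, β, UU.refl _, h, UU.refl _⟩

end Down
section Main
variable {C A : Type} {Γ : BPA C A} {R : Set C}

lemma mem_IdR_iff (hRG : R ⊆ Γ.GroundC) (X : C) :
    X ∈ Γ.IdR R ↔ Γ.UU R (nf R [X]) [] := by
  have := rbisim_iff (Γ := Γ) (R := R) (α := [X]) (β := []) hRG
  rw [nf_nil] at this
  exact this

lemma IdR_subset_ground (hRG : R ⊆ Γ.GroundC) : Γ.IdR R ⊆ Γ.GroundC := by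
  intro X hX
  have hU := (mem_IdR_iff hRG X).mp hX
  have : Γ.TauStarR R (nf R [X]) [] := hU.symm.ground ReflTransGen.refl
  exact tauStar_of_tauStarR_nil hRG _ this [X] rfl

lemma subset_IdR (hRG : R ⊆ Γ.GroundC) : R ⊆ Γ.IdR R := by
  intro X hX
  rw [mem_IdR_iff hRG X, nf_eq_nil_iff.mpr (by simpa using hX)]
  exact UU.refl _

end Main
end BPA
/-- `Id_R` is admissible, contains `R`, and is the smallest admissible set
containing `R`. -/
theorem IdR_smallest_admissible {C A : Type} (Γ : BPA C A) (hΓ : Γ.Normed)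
    (R : Set C) (hR : R ⊆ Γ.GroundC) :
    Γ.Admissible (Γ.IdR R) ∧ R ⊆ Γ.IdR R ∧
      ∀ S : Set C, S ⊆ Γ.GroundC → Γ.Admissible S → R ⊆ S → Γ.IdR R ⊆ S := by
  have hRsub : R ⊆ Γ.IdR R := BPA.subset_IdR hR
  have hSG : Γ.IdR R ⊆ Γ.GroundC := BPA.IdR_subset_ground hR
  refine ⟨?_, hRsub, ?_⟩
  · apply Set.Subset.antisymm
    · intro X hX
      have hU := (BPA.mem_IdR_iff hR X).mp hX
      have hU' : Γ.UU R (BPA.nf R [X]) (BPA.nf R []) := by rwa [BPA.nf_nil]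
      have := BPA.mono_UU hRsub hR hSG hU'
      rw [BPA.mem_IdR_iff hSG X]
      rwa [BPA.nf_nil] at this
    · intro X hX
      have hU := (BPA.mem_IdR_iff hSG X).mp hX
      have hU' : Γ.UU (Γ.IdR R) (BPA.nf (Γ.IdR R) [X]) (BPA.nf (Γ.IdR R) []) := by
        rwa [BPA.nf_nil]
      have hId : ∀ Y ∈ Γ.IdR R, Γ.UU R (BPA.nf R [Y]) [] := fun Y hY =>
        (BPA.mem_IdR_iff hR Y).mp hY
      have := BPA.down_UU hRsub hR hSG hId hU'
      rw [BPA.mem_IdR_iff hR X]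
      rwa [BPA.nf_nil] at this
  · intro S hSG' hadm hRS X hX
    have hU := (BPA.mem_IdR_iff hR X).mp hX
    have hU' : Γ.UU R (BPA.nf R [X]) (BPA.nf R []) := by rwa [BPA.nf_nil]
    have := BPA.mono_UU hRS hR hSG' hU'
    rw [hadm, BPA.mem_IdR_iff hSG' X]
    rwa [BPA.nf_nil] at this
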